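/- arXiv:1807.11652 — 3 statements merged into one kernel-verified Lean document; each statement's English description precedes it below -/
import Mathlib

section
/- Let φ, ψ : [0,1] → ℝ be decreasing (antitone) functions such that ∫₀ᵗ φ(s) ds ≤ ∫₀ᵗ ψ(s) ds for all t ∈ [0,1) and ∫₀¹ φ(s) ds = ∫₀¹ ψ(s) ds. Then for every continuous convex function f : ℝ → ℝ, we have ∫₀¹ f(φ(s)) ds ≤ ∫₀¹ f(ψ(s)) ds. -/
open MeasureTheory Set Topology


noncomputable def hlpSubgrad (f : ℝ → ℝ) (x : ℝ) : ℝ := sInf (slope f x '' Set.Ioi x)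

lemma hlp_slope_mono (f : ℝ → ℝ) (hconv : ConvexOn ℝ Set.univ f) (x : ℝ) :
    MonotoneOn (slope f x) {x}ᶜ := by
  have := hconv.slope_mono (Set.mem_univ x)
  simpa [Set.compl_eq_univ_diff] using this

lemma hlpSubgrad_bddBelow (f : ℝ → ℝ) (hconv : ConvexOn ℝ Set.univ f) (x : ℝ) :
    BddBelow (slope f x '' Set.Ioi x) := by
  refine ⟨slope f x (x - 1), ?_⟩
  rintro z ⟨y, hy, rfl⟩
  exact hlp_slope_mono f hconv x (by simp : (x - 1) ∈ ({x}ᶜ : Set ℝ))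
    (by simpa using (ne_of_gt hy)) (by linarith [Set.mem_Ioi.mp hy])

lemma hlpSubgrad_le_slope (f : ℝ → ℝ) (hconv : ConvexOn ℝ Set.univ f) {x y : ℝ} (hxy : x < y) :
    hlpSubgrad f x ≤ slope f x y :=
  csInf_le (hlpSubgrad_bddBelow f hconv x) ⟨y, hxy, rfl⟩

lemma hlp_slope_le_subgrad (f : ℝ → ℝ) (hconv : ConvexOn ℝ Set.univ f) {x y : ℝ} (hyx : y < x) :
    slope f x y ≤ hlpSubgrad f x := by
  refine le_csInf ⟨slope f x (x + 1), ⟨x + 1, by simp, rfl⟩⟩ ?_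
  rintro z ⟨w, hw, rfl⟩
  exact hlp_slope_mono f hconv x (by simpa using (ne_of_lt hyx)) (by simpa using (ne_of_gt hw))
    (le_of_lt (hyx.trans hw))

lemma hlpSubgrad_mono (f : ℝ → ℝ) (hconv : ConvexOn ℝ Set.univ f) :
    Monotone (hlpSubgrad f) := by
  intro a b hab
  rcases eq_or_lt_of_le hab with rfl | h
  · exact le_refl _
  · calc hlpSubgrad f a ≤ slope f a b := hlpSubgrad_le_slope f hconv h
    _ = slope f b a := slope_comm f a b
    _ ≤ hlpSubgrad f b := hlp_slope_le_subgrad f hconv h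

lemma hlpSubgrad_ineq (f : ℝ → ℝ) (hconv : ConvexOn ℝ Set.univ f) (x y : ℝ) :
    f x + hlpSubgrad f x * (y - x) ≤ f y := by
  rcases lt_trichotomy x y with h | rfl | h
  · have h1 : hlpSubgrad f x ≤ (f y - f x) / (y - x) := by
      simpa [slope_def_field] using hlpSubgrad_le_slope f hconv h
    have h2 : 0 < y - x := by linarith
    nlinarith [(le_div_iff₀ h2).mp h1]
  · simp
  · have h1 : (f y - f x) / (y - x) ≤ hlpSubgrad f x := by
      simpa [slope_def_field] using hlp_slope_le_subgrad f hconv h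
    have h2 : y - x < 0 := by linarith
    nlinarith [(div_le_iff_of_neg h2).mp h1]


lemma hlp_tele (G : ℕ → ℝ) (k : ℕ) : ∀ n, k ≤ n →
    ∑ i ∈ Finset.Ico k n, (G i - G (i+1)) = G k - G n := by
  intro n hn
  induction n with
  | zero => simp [Nat.le_zero.mp hn]
  | succ m ih =>
    rcases Nat.lt_or_ge k (m+1) with h | h
    · have hkm : k ≤ m := Nat.lt_succ_iff.mp h
      rw [Finset.sum_Ico_succ_top hkm, ih hkm]; ring
    · have : k = m + 1 := le_antisymm hn h
      simp [this]

/-- The step approximation of `g` at level `n`. -/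
noncomputable def hlpStep (g : ℝ → ℝ) (n : ℕ) (s : ℝ) : ℝ :=
  g 1 + ∑ i ∈ Finset.Ico 1 n, (g ((i:ℝ)/n) - g (((i:ℝ)+1)/n)) *
    Set.indicator (Set.Icc (0:ℝ) ((i:ℝ)/n)) (fun _ => (1:ℝ)) s

lemma hlpStep_eval (g : ℝ → ℝ) {n : ℕ} (hn : 1 ≤ n) {s : ℝ} (hs : s ∈ Set.Ioc (0:ℝ) 1) :
    hlpStep g n s = g ((⌈(n:ℝ) * s⌉₊ : ℝ) / n) := by
  have hn' : (0:ℝ) < n := by exact_mod_cast hn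
  set k := ⌈(n:ℝ) * s⌉₊ with hk
  have hk1 : 1 ≤ k := by
    have : (0:ℝ) < (n:ℝ) * s := mul_pos hn' hs.1
    rw [hk]; exact Nat.ceil_pos.mpr this
  have hkn : k ≤ n := by
    rw [hk]; exact Nat.ceil_le.mpr (by nlinarith [hs.2])
  have hind : ∀ i : ℕ, Set.indicator (Set.Icc (0:ℝ) ((i:ℝ)/n)) (fun _ => (1:ℝ)) s
      = if k ≤ i then 1 else 0 := by
    intro i
    have hiff : s ≤ (i:ℝ)/n ↔ k ≤ i := by
      rw [hk, le_div_iff₀ hn', mul_comm]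
      exact ⟨fun h => Nat.ceil_le.mpr h, fun h => le_trans (Nat.le_ceil _) (by exact_mod_cast h)⟩
    by_cases h : k ≤ i
    · rw [Set.indicator_of_mem (Set.mem_Icc.mpr ⟨le_of_lt hs.1, hiff.mpr h⟩), if_pos h]
    · rw [Set.indicator_of_notMem, if_neg h]
      intro hmem
      exact h (hiff.mp hmem.2)
  have : hlpStep g n s = g 1 + ∑ i ∈ Finset.Ico k n, (g ((i:ℝ)/n) - g (((i:ℝ)+1)/n)) := by
    rw [hlpStep]
    congr 1
    rw [Finset.sum_congr rfl (fun i _ => by rw [hind i, mul_ite, mul_one, mul_zero]),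
      ← Finset.sum_filter]
    refine Finset.sum_congr ?_ (fun _ _ => rfl)
    ext i
    simp only [Finset.mem_filter, Finset.mem_Ico]
    omega
  rw [this]
  have := hlp_tele (fun i : ℕ => g ((i:ℝ)/n)) k n hkn
  simp only [Nat.cast_add, Nat.cast_one] at this
  rw [this, div_self (ne_of_gt hn')]
  ring

lemma hlpStep_bounds (g : ℝ → ℝ) (hg : Antitone g) (n : ℕ) {s : ℝ} (hs : s ∈ Set.Ioc (0:ℝ) 1) :
    g 1 ≤ hlpStep g n s ∧ hlpStep g n s ≤ g 0 := by
  rcases Nat.eq_zero_or_pos n with rfl | hn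
  · have he : hlpStep g 0 s = g 1 := by
      rw [hlpStep, Finset.Ico_eq_empty (by omega), Finset.sum_empty, add_zero]
    rw [he]; exact ⟨le_refl _, hg (by norm_num)⟩
  · rw [hlpStep_eval g hn hs]
    have hn' : (0:ℝ) < n := by exact_mod_cast hn
    have hkn : (⌈(n:ℝ) * s⌉₊ : ℝ) ≤ n := by
      exact_mod_cast Nat.ceil_le.mpr (by nlinarith [hs.2])
    constructor
    · exact hg (by rw [div_le_one hn']; exact hkn)
    · exact hg (by positivity)

lemma hlp_key (g h : ℝ → ℝ) (hg : Antitone g) (hh : MeasureTheory.IntegrableOn h (Set.Icc 0 1))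
    (hmaj : ∀ t ∈ Set.Icc (0:ℝ) 1, 0 ≤ ∫ s in (0:ℝ)..t, h s)
    (hend : (∫ s in (0:ℝ)..1, h s) = 0) :
    0 ≤ ∫ s in (0:ℝ)..1, g s * h s := by
  have h01 : (0:ℝ) ≤ 1 := by norm_num
  set μ := volume.restrict (Set.Ioc (0:ℝ) 1) with hμ
  have hhi : Integrable h μ := hh.mono_set Set.Ioc_subset_Icc_self
  rw [intervalIntegral.integral_of_le h01]
  have hH : ∀ c ∈ Set.Icc (0:ℝ) 1,
      (∫ s, Set.indicator (Set.Icc (0:ℝ) c) h s ∂μ) = ∫ s in (0:ℝ)..c, h s := by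
    intro c hc
    rw [intervalIntegral.integral_of_le hc.1, integral_indicator measurableSet_Icc, hμ,
      Measure.restrict_restrict measurableSet_Icc]
    congr 1
    congr 1
    ext x
    simp only [Set.mem_inter_iff, Set.mem_Icc, Set.mem_Ioc]
    constructor
    · rintro ⟨⟨_, h2⟩, h3, _⟩; exact ⟨h3, h2⟩
    · rintro ⟨h1, h2⟩; exact ⟨⟨le_of_lt h1, h2⟩, h1, le_trans h2 hc.2⟩
  have hind_int : ∀ c : ℝ, Integrable (Set.indicator (Set.Icc (0:ℝ) c) h) μ :=
    fun c => (integrable_indicator_iff measurableSet_Icc).mpr hhi.integrableOn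
  -- step 1 : each approximation has nonnegative integral
  have step_nonneg : ∀ n : ℕ, 0 ≤ ∫ s, hlpStep g n s * h s ∂μ := by
    intro n
    have heq : (fun s => hlpStep g n s * h s) = fun s => g 1 * h s +
        ∑ i ∈ Finset.Ico 1 n, (g ((i:ℝ)/n) - g (((i:ℝ)+1)/n)) *
          Set.indicator (Set.Icc (0:ℝ) ((i:ℝ)/n)) h s := by
      funext s
      rw [hlpStep, add_mul, Finset.sum_mul]
      congr 1
      refine Finset.sum_congr rfl fun i _ => ?_
      rw [mul_assoc]
      congr 1
      by_cases hx : s ∈ Set.Icc (0:ℝ) ((i:ℝ)/n)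
      · simp [Set.indicator_of_mem hx]
      · simp [Set.indicator_of_notMem hx]
    rw [heq, integral_add (hhi.const_mul _)
        (integrable_finset_sum _ fun i _ => (hind_int _).const_mul _),
      integral_finset_sum _ (fun i _ => (hind_int _).const_mul _), integral_const_mul]
    have h1 : (∫ s, h s ∂μ) = 0 := by
      rw [hμ, ← intervalIntegral.integral_of_le h01]; exact hend
    rw [h1, mul_zero, zero_add]
    refine Finset.sum_nonneg fun i hi => ?_
    have hi' := Finset.mem_Ico.mp hi
    have hn0 : 0 < n := by omega
    have hn' : (0:ℝ) < n := by exact_mod_cast hn0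
    have hc : (i:ℝ)/n ∈ Set.Icc (0:ℝ) 1 :=
      ⟨by positivity, by rw [div_le_one hn']; exact_mod_cast le_of_lt hi'.2⟩
    rw [integral_const_mul, hH _ hc]
    refine mul_nonneg (sub_nonneg.mpr (hg ?_)) (hmaj _ hc)
    rw [div_le_div_iff_of_pos_right hn']
    linarith
  -- step 2 : dominated convergence
  have hFm : ∀ n : ℕ, AEStronglyMeasurable (fun s => hlpStep g n s * h s) μ := by
    intro n
    refine ((measurable_const.add (Finset.measurable_sum _ fun i _ =>
      (measurable_const.indicator measurableSet_Icc).const_mul _)).aestronglyMeasurable).mul hhi.1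
  have hbound_int : Integrable (fun s => (|g 0| + |g 1|) * ‖h s‖) μ := hhi.norm.const_mul _
  have hbound : ∀ n : ℕ, ∀ᵐ s ∂μ, ‖hlpStep g n s * h s‖ ≤ (|g 0| + |g 1|) * ‖h s‖ := by
    intro n
    filter_upwards [ae_restrict_mem measurableSet_Ioc] with s hs
    have hb := hlpStep_bounds g hg n hs
    rw [norm_mul]
    gcongr
    rw [Real.norm_eq_abs]
    refine abs_le.mpr ⟨?_, ?_⟩
    · have := neg_abs_le (g 1); linarith [abs_nonneg (g 0)]
    · have := le_abs_self (g 0); linarith [abs_nonneg (g 1)]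
  have hcont_ae : ∀ᵐ s ∂μ, ContinuousAt g s := by
    rw [ae_iff]
    refine le_antisymm (le_trans (Measure.restrict_le_self _) ?_) zero_le
    rw [(hg.countable_not_continuousAt).measure_zero volume]
  have hae : ∀ᵐ s ∂μ, Filter.Tendsto (fun n : ℕ => hlpStep g n s * h s)
      Filter.atTop (𝓝 (g s * h s)) := by
    filter_upwards [hcont_ae, ae_restrict_mem measurableSet_Ioc] with s hgs hs
    refine Filter.Tendsto.mul_const _ ?_
    have hc : Filter.Tendsto (fun n : ℕ => (⌈(n:ℝ) * s⌉₊ : ℝ) / n) Filter.atTop (𝓝 s) := by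
      have hup : Filter.Tendsto (fun n : ℕ => s + 1 / (n:ℝ)) Filter.atTop (𝓝 s) := by
        have := tendsto_const_nhds (x := s) (f := Filter.atTop (α := ℕ))
        simpa using this.add tendsto_one_div_atTop_nhds_zero_nat
      refine tendsto_of_tendsto_of_tendsto_of_le_of_le' tendsto_const_nhds hup ?_ ?_
      · filter_upwards [Filter.eventually_ge_atTop 1] with n hn
        have hn' : (0:ℝ) < n := by exact_mod_cast hn
        rw [le_div_iff₀ hn']
        calc s * n = n * s := mul_comm _ _
          _ ≤ ⌈(n:ℝ) * s⌉₊ := Nat.le_ceil _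
      · filter_upwards [Filter.eventually_ge_atTop 1] with n hn
        have hn' : (0:ℝ) < n := by exact_mod_cast hn
        rw [div_le_iff₀ hn']
        have := Nat.ceil_lt_add_one (a := (n:ℝ) * s) (mul_nonneg (Nat.cast_nonneg n) (le_of_lt hs.1))
        have h1n : (1 / (n:ℝ)) * (n:ℝ) = 1 := one_div_mul_cancel (ne_of_gt hn')
        nlinarith
    refine (hgs.tendsto.comp hc).congr' ?_
    filter_upwards [Filter.eventually_ge_atTop 1] with n hn
    exact (hlpStep_eval g hn hs).symm
  have hlim := tendsto_integral_of_dominated_convergence _ hFm hbound_int hbound hae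
  exact ge_of_tendsto' hlim step_nonneg

/-- **Hardy–Littlewood–Pólya majorization inequality.** If `φ` and `ψ` are decreasing
(integrable) functions on `[0,1]` such that `∫₀ᵗ φ ≤ ∫₀ᵗ ψ` for all `t ∈ [0,1)` and
`∫₀¹ φ = ∫₀¹ ψ`, then for every continuous convex `f : ℝ → ℝ` we have
`∫₀¹ f ∘ φ ≤ ∫₀¹ f ∘ ψ`. -/
theorem hlp_majorization (φ ψ : ℝ → ℝ)
    (hφ : AntitoneOn φ (Set.Icc 0 1)) (hψ : AntitoneOn ψ (Set.Icc 0 1))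
    (hφi : IntegrableOn φ (Set.Icc 0 1)) (hψi : IntegrableOn ψ (Set.Icc 0 1))
    (hmaj : ∀ t ∈ Set.Ico (0:ℝ) 1, ∫ s in (0:ℝ)..t, φ s ≤ ∫ s in (0:ℝ)..t, ψ s)
    (hsum : ∫ s in (0:ℝ)..1, φ s = ∫ s in (0:ℝ)..1, ψ s)
    (f : ℝ → ℝ) (hconv : ConvexOn ℝ Set.univ f) (hcont : Continuous f) :
    ∫ s in (0:ℝ)..1, f (φ s) ≤ ∫ s in (0:ℝ)..1, f (ψ s) := by
  have h01 : (0:ℝ) ≤ 1 := zero_le_one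
  set g := hlpSubgrad f with hgdef
  have hgmono := hlpSubgrad_mono f hconv
  set p : ℝ → ℝ := fun s => max 0 (min 1 s) with hp
  have hpmem : ∀ s, p s ∈ Set.Icc (0:ℝ) 1 :=
    fun s => ⟨le_max_left _ _, max_le h01 (min_le_left _ _)⟩
  have hpeq : ∀ s ∈ Set.Icc (0:ℝ) 1, p s = s := by
    intro s hs
    rw [hp]
    simp only [min_eq_right hs.2, max_eq_right hs.1]
  have hpmono : Monotone p := fun a b hab =>
    max_le_max (le_refl 0) (min_le_min (le_refl 1) hab)
  set G : ℝ → ℝ := fun s => g (φ (p s)) with hG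
  have hGanti : Antitone G := fun a b hab => hgmono (hφ (hpmem a) (hpmem b) (hpmono hab))
  set h : ℝ → ℝ := fun s => ψ s - φ s with hh
  have hhi : IntegrableOn h (Set.Icc 0 1) := hψi.sub hφi
  have toII : ∀ (u : ℝ → ℝ), IntegrableOn u (Set.Icc 0 1) volume →
      IntervalIntegrable u volume 0 1 := by
    intro u hu
    apply IntegrableOn.intervalIntegrable
    rwa [Set.uIcc_of_le h01]
  have toIIt : ∀ (u : ℝ → ℝ), IntegrableOn u (Set.Icc 0 1) volume → ∀ t ∈ Set.Icc (0:ℝ) 1,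
      IntervalIntegrable u volume 0 t := by
    intro u hu t ht
    apply IntegrableOn.intervalIntegrable
    rw [Set.uIcc_of_le ht.1]
    exact hu.mono_set (Set.Icc_subset_Icc le_rfl ht.2)
  have hmaj' : ∀ t ∈ Set.Icc (0:ℝ) 1, 0 ≤ ∫ s in (0:ℝ)..t, h s := by
    intro t ht
    rw [hh]
    rw [intervalIntegral.integral_sub (toIIt ψ hψi t ht) (toIIt φ hφi t ht), sub_nonneg]
    rcases eq_or_lt_of_le ht.2 with rfl | hlt
    · exact le_of_eq hsum
    · exact hmaj t ⟨ht.1, hlt⟩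
  have hend : (∫ s in (0:ℝ)..1, h s) = 0 := by
    rw [hh, intervalIntegral.integral_sub (toII ψ hψi) (toII φ hφi), sub_eq_zero]
    exact hsum.symm
  have key : 0 ≤ ∫ s in (0:ℝ)..1, G s * h s := hlp_key G h hGanti hhi hmaj' hend
  -- pointwise subgradient inequality
  have hpw : ∀ s ∈ Set.Icc (0:ℝ) 1, f (φ s) + G s * h s ≤ f (ψ s) := by
    intro s hs
    have : G s = g (φ s) := by rw [hG]; simp only [hpeq s hs]
    rw [this, hh]
    exact hlpSubgrad_ineq f hconv (φ s) (ψ s)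
  -- integrability of the compositions
  have hcomp : ∀ (u : ℝ → ℝ), AntitoneOn u (Set.Icc 0 1) → IntegrableOn u (Set.Icc 0 1) →
      IntegrableOn (fun s => f (u s)) (Set.Icc 0 1) := by
    intro u hu hui
    have hum : AEMeasurable u (volume.restrict (Set.Icc (0:ℝ) 1)) :=
      aemeasurable_restrict_of_antitoneOn measurableSet_Icc hu
    have hm : AEStronglyMeasurable (fun s => f (u s)) (volume.restrict (Set.Icc (0:ℝ) 1)) :=
      (hcont.measurable.comp_aemeasurable hum).aestronglyMeasurable
    obtain ⟨C, hC⟩ := (isCompact_Icc (a := u 1) (b := u 0)).exists_bound_of_continuousOn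
      hcont.continuousOn
    refine Integrable.mono' (g := fun _ => C) ((integrableOn_const_iff (C := C)).mpr (Or.inr measure_Icc_lt_top)) hm ?_
    filter_upwards [ae_restrict_mem measurableSet_Icc] with s hs
    exact hC _ ⟨hu hs ⟨h01, le_refl 1⟩ hs.2, hu ⟨le_refl 0, h01⟩ hs hs.1⟩
  have hfφ := hcomp φ hφ hφi
  have hfψ := hcomp ψ hψ hψi
  -- integrability of G * h
  have hGb : ∀ s, g (φ 1) ≤ G s ∧ G s ≤ g (φ 0) := by
    intro s
    exact ⟨hgmono (hφ (hpmem s) ⟨h01, le_refl 1⟩ (hpmem s).2),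
      hgmono (hφ ⟨le_refl 0, h01⟩ (hpmem s) (hpmem s).1)⟩
  have hGh : IntegrableOn (fun s => G s * h s) (Set.Icc 0 1) := by
    refine hhi.bdd_mul (c := |g (φ 0)| + |g (φ 1)|) (hGanti.measurable.aestronglyMeasurable) (Filter.Eventually.of_forall ?_)
    intro s
    rw [Real.norm_eq_abs]
    refine abs_le.mpr ⟨?_, ?_⟩
    · have := neg_abs_le (g (φ 1)); linarith [abs_nonneg (g (φ 0)), (hGb s).1]
    · have := le_abs_self (g (φ 0)); linarith [abs_nonneg (g (φ 1)), (hGb s).2]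
  -- conclusion
  have hadd : (∫ s in (0:ℝ)..1, (f (φ s) + G s * h s)) =
      (∫ s in (0:ℝ)..1, f (φ s)) + ∫ s in (0:ℝ)..1, G s * h s :=
    intervalIntegral.integral_add (toII _ hfφ) (toII _ hGh)
  have hmono := intervalIntegral.integral_mono_on h01
    ((toII _ hfφ).add (toII _ hGh)) (toII _ hfψ) hpw
  rw [hadd] at hmono
  linarith
end

section
/- Let φ, ψ : [0,1] → ℝ be decreasing functions with ∫₀ᵗ φ ≤ ∫₀ᵗ ψ for all t ∈ [0,1) and ∫₀¹ φ = ∫₀¹ ψ. If f : ℝ → ℝ is strictly convex and continuous and ∫₀¹ f(φ(s)) ds = ∫₀¹ f(ψ(s)) ds, then φ = ψ almost everywhere on [0,1]. -/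
open MeasureTheory Set

noncomputable def hlpSubg (f : ℝ → ℝ) (x : ℝ) : ℝ :=
  sSup ((fun y => (f y - f x) / (y - x)) '' Set.Iio x)

lemma hlpSubg_spec (f : ℝ → ℝ) (hf : StrictConvexOn ℝ Set.univ f) :
    Monotone (hlpSubg f) ∧ (∀ x y, hlpSubg f x * (y - x) ≤ f y - f x) ∧
      (∀ x y, y ≠ x → hlpSubg f x * (y - x) < f y - f x) := by
  have hcv := hf.convexOn
  set sl : ℝ → ℝ → ℝ := fun x y => (f y - f x) / (y - x) with hsl
  have hub : ∀ x z, x < z → ∀ a ∈ (fun y => sl x y) '' Set.Iio x, a ≤ sl x z := by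
    rintro x z hxz a ⟨y, hy, rfl⟩
    exact hcv.secant_mono (Set.mem_univ x) (Set.mem_univ y) (Set.mem_univ z)
      (ne_of_lt hy) (ne_of_gt hxz) (le_of_lt (hy.trans hxz))
  have hne : ∀ x : ℝ, ((fun y => sl x y) '' Set.Iio x).Nonempty :=
    fun x => ⟨sl x (x - 1), Set.mem_image_of_mem _ (by simp)⟩
  have hbdd : ∀ x : ℝ, BddAbove ((fun y => sl x y) '' Set.Iio x) :=
    fun x => ⟨sl x (x + 1), fun a ha => hub x (x + 1) (by linarith) a ha⟩
  have hle : ∀ x y, y < x → sl x y ≤ hlpSubg f x :=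
    fun x y hy => le_csSup (hbdd x) (Set.mem_image_of_mem _ hy)
  have hge : ∀ x z, x < z → hlpSubg f x ≤ sl x z :=
    fun x z hxz => csSup_le (hne x) (hub x z hxz)
  have hstrict : ∀ x y, y ≠ x → hlpSubg f x * (y - x) < f y - f x := by
    intro x y hyx
    rcases lt_or_gt_of_ne hyx with h | h
    · have hm1 : y < (y + x) / 2 := by linarith
      have hm2 : (y + x) / 2 < x := by linarith
      have h1 : sl x y < sl x ((y + x) / 2) :=
        hf.secant_strict_mono (Set.mem_univ x) (Set.mem_univ y) (Set.mem_univ _)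
          hyx (ne_of_lt hm2) hm1
      have h2 : sl x y < hlpSubg f x := h1.trans_le (hle x _ hm2)
      have h3 : hlpSubg f x * (y - x) < sl x y * (y - x) :=
        mul_lt_mul_of_neg_right h2 (by linarith)
      have h4 : sl x y * (y - x) = f y - f x := div_mul_cancel₀ _ (by intro h'; apply hyx; linarith [sub_eq_zero.mp h'])
      linarith
    · have hm1 : x < (x + y) / 2 := by linarith
      have hm2 : (x + y) / 2 < y := by linarith
      have h1 : sl x ((x + y) / 2) < sl x y :=
        hf.secant_strict_mono (Set.mem_univ x) (Set.mem_univ _) (Set.mem_univ y)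
          (ne_of_gt hm1) hyx hm2
      have h2 : hlpSubg f x < sl x y := (hge x _ hm1).trans_lt h1
      have h3 : hlpSubg f x * (y - x) < sl x y * (y - x) :=
        mul_lt_mul_of_pos_right h2 (by linarith)
      have h4 : sl x y * (y - x) = f y - f x := div_mul_cancel₀ _ (by intro h'; apply hyx; linarith [sub_eq_zero.mp h'])
      linarith
  refine ⟨?_, ?_, hstrict⟩
  · intro a b hab
    rcases eq_or_lt_of_le hab with rfl | hab
    · exact le_refl _
    have h1 : hlpSubg f a ≤ sl a b := hge a b hab
    have h2 : sl a b = sl b a := by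
      simp only [hsl]
      rw [← neg_div_neg_eq]
      ring_nf
    exact h1.trans (h2 ▸ hle b a hab)
  · intro x y
    rcases eq_or_ne y x with rfl | h
    · simp
    · exact (hstrict x y h).le

/-- **Equality case of the Hardy–Littlewood–Pólya majorization inequality.** With `φ, ψ`
decreasing integrable on `[0,1]`, majorization `∫₀ᵗ φ ≤ ∫₀ᵗ ψ` on `[0,1)` and
`∫₀¹ φ = ∫₀¹ ψ`, if `f` is strictly convex and continuous with `f ∘ φ, f ∘ ψ` integrable and
`∫₀¹ f ∘ φ = ∫₀¹ f ∘ ψ`, then `φ = ψ` almost everywhere on `[0,1]`. -/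
theorem hlp_majorization_eq_case (φ ψ : ℝ → ℝ)
    (hφ : AntitoneOn φ (Set.Icc 0 1)) (hψ : AntitoneOn ψ (Set.Icc 0 1))
    (hφi : IntegrableOn φ (Set.Icc 0 1)) (hψi : IntegrableOn ψ (Set.Icc 0 1))
    (hmaj : ∀ t ∈ Set.Ico (0:ℝ) 1, ∫ s in (0:ℝ)..t, φ s ≤ ∫ s in (0:ℝ)..t, ψ s)
    (hsum : ∫ s in (0:ℝ)..1, φ s = ∫ s in (0:ℝ)..1, ψ s)
    (f : ℝ → ℝ) (hconv : StrictConvexOn ℝ Set.univ f) (hcont : Continuous f)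
    (hfφi : IntegrableOn (fun s => f (φ s)) (Set.Icc 0 1))
    (hfψi : IntegrableOn (fun s => f (ψ s)) (Set.Icc 0 1))
    (heq : ∫ s in (0:ℝ)..1, f (φ s) = ∫ s in (0:ℝ)..1, f (ψ s)) :
    ∀ᵐ s ∂(volume.restrict (Set.Icc (0:ℝ) 1)), φ s = ψ s := by
  classical
  obtain ⟨gmono, gle, glt⟩ := hlpSubg_spec f hconv
  set g := hlpSubg f with hg
  -- projection onto [0,1] and monotone extensions
  set p : ℝ → ℝ := fun x => max 0 (min 1 x) with hp
  have hpmem : ∀ x, p x ∈ Set.Icc (0:ℝ) 1 :=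
    fun x => ⟨le_max_left _ _, max_le (by norm_num) (min_le_left _ _)⟩
  have hpmono : Monotone p := fun a b hab =>
    max_le_max (le_refl 0) (min_le_min (le_refl 1) hab)
  have hpeq : ∀ x ∈ Set.Icc (0:ℝ) 1, p x = x := by
    intro x hx
    simp only [hp]
    rw [min_eq_right hx.2, max_eq_right hx.1]
  set Φ : ℝ → ℝ := fun x => φ (p x) with hΦ
  set Ψ : ℝ → ℝ := fun x => ψ (p x) with hΨ
  have hΦeq : Set.EqOn Φ φ (Set.Icc 0 1) := fun x hx => by simp only [hΦ, hpeq x hx]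
  have hΨeq : Set.EqOn Ψ ψ (Set.Icc 0 1) := fun x hx => by simp only [hΨ, hpeq x hx]
  have hΦanti : Antitone Φ := fun a b hab => hφ (hpmem a) (hpmem b) (hpmono hab)
  have hΨanti : Antitone Ψ := fun a b hab => hψ (hpmem a) (hpmem b) (hpmono hab)
  have hΦm : Measurable Φ := hΦanti.measurable
  have hΨm : Measurable Ψ := hΨanti.measurable
  have hΦi : IntegrableOn Φ (Set.Icc 0 1) := hφi.congr_fun hΦeq.symm measurableSet_Icc
  have hΨi : IntegrableOn Ψ (Set.Icc 0 1) := hψi.congr_fun hΨeq.symm measurableSet_Icc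
  set h : ℝ → ℝ := fun s => Ψ s - Φ s with hh
  have hhm : Measurable h := hΨm.sub hΦm
  have hhi : IntegrableOn h (Set.Icc 0 1) := hΨi.sub hΦi
  -- the antitone weight
  set w : ℝ → ℝ := fun s => g (Φ s) with hw
  have hwanti : Antitone w := fun a b hab => gmono (hΦanti hab)
  have hwm : Measurable w := hwanti.measurable
  have hwbound : ∀ s : ℝ, |w s| ≤ max |w 1| |w 0| := by
    intro s
    have hps : w s = w (p s) := by
      simp only [hw, hΦ, hp]
      have hpp := hpeq (p s) (hpmem s)
      simp only [hp] at hpp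
      rw [hpp]
    rw [hps]
    exact abs_le_max_abs_abs (hwanti (hpmem s).2) (hwanti (hpmem s).1)
  have hwhi : IntegrableOn (fun s => w s * h s) (Set.Icc 0 1) :=
    hhi.bdd_mul hwm.aestronglyMeasurable
      (c := max |w 1| |w 0|) (Filter.Eventually.of_forall fun s => by simpa [Real.norm_eq_abs] using hwbound s)
  -- M2 : total integral of h is zero
  have hsub : Set.Ioc (0:ℝ) 1 ⊆ Set.Icc (0:ℝ) 1 := Set.Ioc_subset_Icc_self
  have hM2 : ∫ s in Set.Icc (0:ℝ) 1, h s = 0 := by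
    rw [integral_Icc_eq_integral_Ioc]
    have hsplit : ∫ s in Set.Ioc (0:ℝ) 1, h s
        = (∫ s in Set.Ioc (0:ℝ) 1, Ψ s) - ∫ s in Set.Ioc (0:ℝ) 1, Φ s :=
      integral_sub (hΨi.mono_set hsub) (hΦi.mono_set hsub)
    have eψ : ∫ s in Set.Ioc (0:ℝ) 1, Ψ s = ∫ s in Set.Ioc (0:ℝ) 1, ψ s :=
      setIntegral_congr_fun measurableSet_Ioc (fun x hx => hΨeq (hsub hx))
    have eφ : ∫ s in Set.Ioc (0:ℝ) 1, Φ s = ∫ s in Set.Ioc (0:ℝ) 1, φ s :=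
      setIntegral_congr_fun measurableSet_Ioc (fun x hx => hΦeq (hsub hx))
    have h1 : ∫ s in (0:ℝ)..1, ψ s = ∫ s in Set.Ioc (0:ℝ) 1, ψ s :=
      intervalIntegral.integral_of_le zero_le_one
    have h2 : ∫ s in (0:ℝ)..1, φ s = ∫ s in Set.Ioc (0:ℝ) 1, φ s :=
      intervalIntegral.integral_of_le zero_le_one
    rw [hsplit, eψ, eφ, ← h1, ← h2, hsum]
    ring
  -- M3 : partial integrals nonnegative
  have hM3 : ∀ t ∈ Set.Ioc (0:ℝ) 1, 0 ≤ ∫ s in Set.Icc (0:ℝ) 1 ∩ Set.Iio t, h s := by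
    intro t ht
    have hset : Set.Icc (0:ℝ) 1 ∩ Set.Iio t = Set.Ico 0 t := by
      ext x
      constructor
      · rintro ⟨hx1, hx2⟩; exact ⟨hx1.1, hx2⟩
      · rintro ⟨hx1, hx2⟩; exact ⟨⟨hx1, le_of_lt (lt_of_lt_of_le hx2 ht.2)⟩, hx2⟩
    rw [hset, integral_Ico_eq_integral_Ioo, ← integral_Ioc_eq_integral_Ioo]
    have hsub' : Set.Ioc (0:ℝ) t ⊆ Set.Icc (0:ℝ) 1 := fun x hx =>
      ⟨le_of_lt hx.1, hx.2.trans ht.2⟩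
    have hsplit : ∫ s in Set.Ioc (0:ℝ) t, h s
        = (∫ s in Set.Ioc (0:ℝ) t, Ψ s) - ∫ s in Set.Ioc (0:ℝ) t, Φ s :=
      integral_sub (hΨi.mono_set hsub') (hΦi.mono_set hsub')
    have eψ : ∫ s in Set.Ioc (0:ℝ) t, Ψ s = ∫ s in Set.Ioc (0:ℝ) t, ψ s :=
      setIntegral_congr_fun measurableSet_Ioc (fun x hx => hΨeq (hsub' hx))
    have eφ : ∫ s in Set.Ioc (0:ℝ) t, Φ s = ∫ s in Set.Ioc (0:ℝ) t, φ s :=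
      setIntegral_congr_fun measurableSet_Ioc (fun x hx => hΦeq (hsub' hx))
    have h1 : ∫ s in (0:ℝ)..t, ψ s = ∫ s in Set.Ioc (0:ℝ) t, ψ s :=
      intervalIntegral.integral_of_le (le_of_lt ht.1)
    have h2 : ∫ s in (0:ℝ)..t, φ s = ∫ s in Set.Ioc (0:ℝ) t, φ s :=
      intervalIntegral.integral_of_le (le_of_lt ht.1)
    rw [hsplit, eψ, eφ, ← h1, ← h2]
    rcases eq_or_lt_of_le ht.2 with rfl | hlt
    · rw [hsum]; simp
    · have := hmaj t ⟨le_of_lt ht.1, hlt⟩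
      linarith
  -- M5 : key positivity
  have hM5 : 0 ≤ ∫ s in Set.Icc (0:ℝ) 1, w s * h s := by
    set m : ℝ → ℝ := fun x => -w x with hm
    have hmono : Monotone m := fun a b hab => neg_le_neg (hwanti hab)
    set G := hmono.stieltjesFunction with hGdef
    have hGae : ∀ᵐ x ∂(volume : Measure ℝ), G x = m x := by
      have hc : {x : ℝ | G x ≠ m x}.Countable := by
        apply hmono.countable_not_continuousAt.mono
        intro x hx
        simp only [Set.mem_setOf_eq] at hx ⊢
        intro hcontx
        refine hx ?_
        rw [hGdef, hmono.stieltjesFunction_eq x]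
        exact rightLim_eq_of_tendsto
          (hcontx.tendsto.mono_left nhdsWithin_le_nhds)
      exact ae_iff.mpr (Set.Countable.measure_zero hc _)
    set ν := G.measure.restrict (Set.Ioc 0 1) with hν
    haveI hνfin : IsFiniteMeasure ν := by
      constructor
      rw [hν, Measure.restrict_apply_univ, G.measure_Ioc]
      exact ENNReal.ofReal_lt_top
    have hGm : Measurable fun s : ℝ => G 1 - G s := measurable_const.sub G.mono.measurable
    have key : ∀ s ∈ Set.Icc (0:ℝ) 1, G 1 - G s = (ν (Set.Ioi s)).toReal := by
      intro s hs
      rw [hν, Measure.restrict_apply measurableSet_Ioi]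
      have hIoi : Set.Ioi s ∩ Set.Ioc 0 1 = Set.Ioc s 1 := by
        ext x
        constructor
        · rintro ⟨h1, _, h3⟩; exact ⟨h1, h3⟩
        · rintro ⟨h1, h2⟩; exact ⟨h1, lt_of_le_of_lt hs.1 h1, h2⟩
      rw [hIoi, G.measure_Ioc, ENNReal.toReal_ofReal (sub_nonneg.mpr (G.mono hs.2))]
    have hwae : (fun s => w s * h s) =ᵐ[volume.restrict (Set.Icc (0:ℝ) 1)]
        (fun s => (-G 1) * h s + (G 1 - G s) * h s) := by
      filter_upwards [ae_restrict_of_ae hGae] with s hGs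
      have hws : w s = -G s := by
        simp only [hm] at hGs
        linarith
      rw [hws]; ring
    rw [integral_congr_ae hwae]
    have hqh_int : IntegrableOn (fun s => (G 1 - G s) * h s) (Set.Icc 0 1) := by
      refine Integrable.mono' (hhi.abs.const_mul (G 1 - G 0))
        ((hGm.mul hhm).aestronglyMeasurable) ?_
      filter_upwards [ae_restrict_mem measurableSet_Icc] with s hs
      rw [Real.norm_eq_abs, abs_mul]
      have h1 : |G 1 - G s| ≤ G 1 - G 0 := by
        rw [abs_of_nonneg (sub_nonneg.mpr (G.mono hs.2))]
        have := G.mono hs.1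
        linarith
      exact mul_le_mul_of_nonneg_right h1 (abs_nonneg _)
    rw [integral_add (hhi.const_mul _) hqh_int]
    have hz : ∫ s in Set.Icc (0:ℝ) 1, (-G 1) * h s = 0 := by
      rw [integral_const_mul, hM2, mul_zero]
    rw [hz, zero_add]
    -- Fubini argument
    set P := (volume : Measure ℝ).restrict (Set.Icc (0:ℝ) 1) with hP
    set F : ℝ × ℝ → ℝ := fun z => if z.1 < z.2 then h z.1 else 0 with hF
    have hA : MeasurableSet {z : ℝ × ℝ | z.1 < z.2} :=
      measurableSet_lt measurable_fst measurable_snd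
    have hFind : F = Set.indicator {z : ℝ × ℝ | z.1 < z.2} (fun z => h z.1) := by
      funext z
      simp only [hF, Set.indicator, Set.mem_setOf_eq]
    have hfst : Integrable (fun z : ℝ × ℝ => h z.1) (P.prod ν) := by
      refine (integrable_prod_iff (f := fun z : ℝ × ℝ => h z.1)
        (Measurable.aestronglyMeasurable (hhm.comp measurable_fst))).mpr ⟨?_, ?_⟩
      · exact Filter.Eventually.of_forall fun s => integrable_const (h s)
      · simp only [integral_const, smul_eq_mul]
        exact hhi.norm.const_mul _
    have hFi : Integrable F (P.prod ν) := by
      rw [hFind]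
      exact hfst.indicator hA
    have hswap := MeasureTheory.integral_integral_swap (f := fun s t => F (s, t))
      (μ := P) (ν := ν) hFi
    have hLHS : ∫ s, (∫ t, F (s, t) ∂ν) ∂P = ∫ s in Set.Icc (0:ℝ) 1, (G 1 - G s) * h s := by
      rw [hP]
      apply setIntegral_congr_fun measurableSet_Icc
      intro s hs
      have hFs : (fun t => F (s, t)) = Set.indicator (Set.Ioi s) (fun _ => h s) := by
        funext t
        simp only [hF, Set.indicator, Set.mem_Ioi]
      show (∫ t, F (s, t) ∂ν) = (G 1 - G s) * h s
      rw [hFs, integral_indicator_const _ measurableSet_Ioi, key s hs, smul_eq_mul, measureReal_def]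
    have hRHS : 0 ≤ ∫ t, (∫ s, F (s, t) ∂P) ∂ν := by
      apply integral_nonneg_of_ae
      filter_upwards [ae_restrict_mem (μ := G.measure) measurableSet_Ioc] with t ht
      have hFt : (fun s => F (s, t)) = Set.indicator (Set.Iio t) h := by
        funext s
        simp only [hF, Set.indicator, Set.mem_Iio]
      show 0 ≤ ∫ s, F (s, t) ∂P
      rw [hFt, integral_indicator measurableSet_Iio, hP,
        Measure.restrict_restrict measurableSet_Iio, Set.inter_comm]
      exact hM3 t ht
    rw [← hLHS, hswap]
    exact hRHS
  -- conclusion via strict convexity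
  set D : ℝ → ℝ := fun s => (f (Ψ s) - f (Φ s)) - w s * h s with hD
  have hDnonneg : ∀ s, 0 ≤ D s := fun s => by
    have := gle (Φ s) (Ψ s); simp only [hD, hh, hw]; linarith
  have hDpos : ∀ s, Ψ s ≠ Φ s → 0 < D s := fun s hne => by
    have := glt (Φ s) (Ψ s) hne; simp only [hD, hh, hw]; linarith
  have hDi : IntegrableOn D (Set.Icc 0 1) := by
    apply Integrable.sub _ hwhi
    have h1 : IntegrableOn (fun s => f (Ψ s)) (Set.Icc 0 1) :=
      hfψi.congr_fun (fun x hx => by rw [hΨeq hx]) measurableSet_Icc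
    have h2 : IntegrableOn (fun s => f (Φ s)) (Set.Icc 0 1) :=
      hfφi.congr_fun (fun x hx => by rw [hΦeq hx]) measurableSet_Icc
    exact h1.sub h2
  have hfΨi : IntegrableOn (fun s => f (Ψ s)) (Set.Icc 0 1) :=
    hfψi.congr_fun (fun x hx => by rw [hΨeq hx]) measurableSet_Icc
  have hfΦi : IntegrableOn (fun s => f (Φ s)) (Set.Icc 0 1) :=
    hfφi.congr_fun (fun x hx => by rw [hΦeq hx]) measurableSet_Icc
  have hFdiff : ∫ s in Set.Icc (0:ℝ) 1, (f (Ψ s) - f (Φ s)) = 0 := by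
    rw [integral_Icc_eq_integral_Ioc,
      integral_sub (hfΨi.mono_set hsub) (hfΦi.mono_set hsub)]
    have eψ : ∫ s in Set.Ioc (0:ℝ) 1, f (Ψ s) = ∫ s in Set.Ioc (0:ℝ) 1, f (ψ s) :=
      setIntegral_congr_fun measurableSet_Ioc (fun x hx => by rw [hΨeq (hsub hx)])
    have eφ : ∫ s in Set.Ioc (0:ℝ) 1, f (Φ s) = ∫ s in Set.Ioc (0:ℝ) 1, f (φ s) :=
      setIntegral_congr_fun measurableSet_Ioc (fun x hx => by rw [hΦeq (hsub hx)])
    have h1 : ∫ s in (0:ℝ)..1, f (ψ s) = ∫ s in Set.Ioc (0:ℝ) 1, f (ψ s) :=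
      intervalIntegral.integral_of_le zero_le_one
    have h2 : ∫ s in (0:ℝ)..1, f (φ s) = ∫ s in Set.Ioc (0:ℝ) 1, f (φ s) :=
      intervalIntegral.integral_of_le zero_le_one
    rw [eψ, eφ, ← h1, ← h2, heq]
    ring
  have hDint : ∫ s in Set.Icc (0:ℝ) 1, D s ≤ 0 := by
    have hsplit : ∫ s in Set.Icc (0:ℝ) 1, D s
        = (∫ s in Set.Icc (0:ℝ) 1, (f (Ψ s) - f (Φ s))) - ∫ s in Set.Icc (0:ℝ) 1, w s * h s :=
      integral_sub (hfΨi.sub hfΦi) hwhi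
    rw [hsplit, hFdiff]
    linarith
  have hDzero : ∀ᵐ s ∂(volume.restrict (Set.Icc (0:ℝ) 1)), D s = 0 := by
    have hint : ∫ s in Set.Icc (0:ℝ) 1, D s = 0 :=
      le_antisymm hDint (integral_nonneg fun s => hDnonneg s)
    exact (integral_eq_zero_iff_of_nonneg (fun s => hDnonneg s) hDi).mp hint
  filter_upwards [hDzero, ae_restrict_mem measurableSet_Icc] with s hDs hs
  have : Ψ s = Φ s := by
    by_contra hne
    exact absurd hDs (ne_of_gt (hDpos s hne))
  have := this
  rw [hΦeq hs, hΨeq hs] at this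
  exact this.symm
end

section
/- Let x, y be n×n Hermitian complex matrices with 0 ≤ x ≤ y (Loewner order) and let f : [0,∞) → ℝ be a strictly monotone increasing continuous function. Then Tr(f(x)) ≤ Tr(f(y)), with equality if and only if x = y. -/
open Matrix
open scoped ComplexOrder

/-- The absolute value `|x| = (xᴴ x)^(1/2)` of a complex matrix. -/
noncomputable def matAbs {m : Type*} [Fintype m] [DecidableEq m] (x : Matrix m m ℂ) : Matrix m m ℂ :=
  ((Matrix.posSemidef_conjTranspose_mul_self x).1.eigenvectorUnitary : Matrix m m ℂ) *
    Matrix.diagonal ((↑) ∘ Real.sqrt ∘ (Matrix.posSemidef_conjTranspose_mul_self x).1.eigenvalues) *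
    (star (Matrix.posSemidef_conjTranspose_mul_self x).1.eigenvectorUnitary : Matrix m m ℂ)

theorem matAbs_herm {m : Type*} [Fintype m] [DecidableEq m] (x : Matrix m m ℂ) :
    (matAbs x).IsHermitian := by
  unfold matAbs Matrix.IsHermitian
  simp [Matrix.conjTranspose_mul, Matrix.diagonal_conjTranspose, mul_assoc,
    Matrix.star_eq_conjTranspose, Pi.star_def, Complex.conj_ofReal, Function.comp_def]

/-- Functional calculus for a Hermitian matrix: apply `f : ℝ → ℝ` to the eigenvalues. -/
noncomputable def herCFC {m : Type*} [Fintype m] [DecidableEq m] (x : Matrix m m ℂ)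
    (hx : x.IsHermitian) (f : ℝ → ℝ) : Matrix m m ℂ :=
  (hx.eigenvectorUnitary : Matrix m m ℂ) *
    Matrix.diagonal (fun i => (f (hx.eigenvalues i) : ℂ)) *
    star (hx.eigenvectorUnitary : Matrix m m ℂ)

theorem herCFC_herm {m : Type*} [Fintype m] [DecidableEq m] (x : Matrix m m ℂ)
    (hx : x.IsHermitian) (f : ℝ → ℝ) : (herCFC x hx f).IsHermitian := by
  unfold herCFC Matrix.IsHermitian
  simp [Matrix.conjTranspose_mul, Matrix.diagonal_conjTranspose, mul_assoc,
    Matrix.star_eq_conjTranspose, Pi.star_def, Complex.conj_ofReal]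

/-- The power `|x|^p` of the absolute value of a matrix, via functional calculus. -/
noncomputable def matAbsPow {m : Type*} [Fintype m] [DecidableEq m] (x : Matrix m m ℂ) (p : ℝ) :
    Matrix m m ℂ :=
  herCFC (matAbs x) (matAbs_herm x) (fun t => t ^ p)

theorem matAbsPow_herm {m : Type*} [Fintype m] [DecidableEq m] (x : Matrix m m ℂ) (p : ℝ) :
    (matAbsPow x p).IsHermitian :=
  herCFC_herm _ _ _

/-- Rearrangement of a tuple of reals in decreasing order. -/
noncomputable def sortDesc {n : ℕ} (f : Fin n → ℝ) : Fin n → ℝ :=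
  fun i => f (Tuple.sort f i.rev)

/-- Decreasingly ordered eigenvalues of a Hermitian matrix. -/
noncomputable def eigsDesc {n : ℕ} {x : Matrix (Fin n) (Fin n) ℂ} (hx : x.IsHermitian) :
    Fin n → ℝ :=
  sortDesc hx.eigenvalues

/-- Decreasingly ordered singular values of a complex matrix. -/
noncomputable def svalsDesc {n : ℕ} (x : Matrix (Fin n) (Fin n) ℂ) : Fin n → ℝ :=
  eigsDesc (matAbs_herm x)

/-! ### Auxiliary lemmas -/

section Auxiliary

lemma trace_conj_diag {m : Type*} [Fintype m] [DecidableEq m]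
    (U : Matrix.unitaryGroup m ℂ) (d : m → ℂ) :
    ((U : Matrix m m ℂ) * Matrix.diagonal d * star (U : Matrix m m ℂ)).trace = ∑ i, d i := by
  rw [Matrix.trace_mul_cycle, Unitary.coe_star_mul_self, Matrix.one_mul,
    Matrix.trace_diagonal]

lemma trace_eq_sum_eig {m : Type*} [Fintype m] [DecidableEq m] {x : Matrix m m ℂ}
    (hx : x.IsHermitian) : x.trace = ∑ i, (hx.eigenvalues i : ℂ) := by
  conv_lhs => rw [hx.spectral_theorem, Unitary.conjStarAlgAut_apply]
  rw [trace_conj_diag hx.eigenvectorUnitary]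
  rfl

lemma trace_herCFC {m : Type*} [Fintype m] [DecidableEq m] (x : Matrix m m ℂ)
    (hx : x.IsHermitian) (f : ℝ → ℝ) :
    (herCFC x hx f).trace = ∑ i, (f (hx.eigenvalues i) : ℂ) :=
  trace_conj_diag hx.eigenvectorUnitary _

lemma psd_trace_zero {m : Type*} [Fintype m] [DecidableEq m] {z : Matrix m m ℂ}
    (hz : z.PosSemidef) (h : z.trace = 0) : z = 0 := by
  have h1 : ∑ i, hz.1.eigenvalues i = 0 := by
    have h2 := trace_eq_sum_eig hz.1
    rw [h] at h2
    exact_mod_cast h2.symm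
  have h2 : ∀ i ∈ Finset.univ, hz.1.eigenvalues i = 0 :=
    (Finset.sum_eq_zero_iff_of_nonneg (fun i _ => hz.eigenvalues_nonneg i)).mp h1
  have h3 := hz.1.spectral_theorem
  have h4 : Matrix.diagonal (RCLike.ofReal ∘ hz.1.eigenvalues) = (0 : Matrix m m ℂ) := by
    ext i j
    by_cases hij : i = j
    · subst hij; simp [h2 i (Finset.mem_univ i)]
    · simp [Matrix.diagonal_apply_ne _ hij]
  rw [h4, map_zero] at h3
  exact h3

variable {n : ℕ}

lemma repr_zero_of_span (B : OrthonormalBasis (Fin n) ℂ (EuclideanSpace ℂ (Fin n)))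
    (s : Set (Fin n)) {v : EuclideanSpace ℂ (Fin n)}
    (hv : v ∈ Submodule.span ℂ (⇑B '' s)) {i : Fin n} (hi : i ∉ s) :
    B.repr v i = 0 := by
  rw [B.repr_apply_apply]
  induction hv using Submodule.span_induction with
  | mem w hw =>
    obtain ⟨j, hj, rfl⟩ := hw
    exact B.orthonormal.2 (fun h => hi (h ▸ hj))
  | zero => simp
  | add _ _ _ _ h1 h2 => simp [inner_add_right, h1, h2]
  | smul c _ _ h1 => simp [inner_smul_right, h1]

lemma norm_sq_repr (B : OrthonormalBasis (Fin n) ℂ (EuclideanSpace ℂ (Fin n)))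
    (v : EuclideanSpace ℂ (Fin n)) :
    ‖v‖ ^ 2 = ∑ j, Complex.normSq (B.repr v j) := by
  rw [← B.repr.norm_map v, EuclideanSpace.norm_eq, Real.sq_sqrt (by positivity)]
  simp [Complex.sq_norm]

lemma quad_repr (B : OrthonormalBasis (Fin n) ℂ (EuclideanSpace ℂ (Fin n)))
    (A : Matrix (Fin n) (Fin n) ℂ) (μ : Fin n → ℝ)
    (hB : ∀ j, A *ᵥ ⇑(B j) = μ j • ⇑(B j))
    (v : EuclideanSpace ℂ (Fin n)) :
    (star (⇑v : Fin n → ℂ) ⬝ᵥ (A *ᵥ ⇑v)).re = ∑ j, μ j * Complex.normSq (B.repr v j) := by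
  have hTB : ∀ j, Matrix.toEuclideanLin A (B j) = ((μ j : ℂ)) • B j := by
    intro j
    apply (WithLp.equiv 2 (Fin n → ℂ)).injective
    simp only [WithLp.equiv_apply, Matrix.ofLp_toEuclideanLin_apply, WithLp.ofLp_smul]
    rw [hB j]
    ext i
    simp [Complex.real_smul]
  have hTv : Matrix.toEuclideanLin A v = ∑ j, (B.repr v j * (μ j : ℂ)) • B j := by
    conv_lhs => rw [← B.sum_repr v]
    rw [map_sum]
    simp only [_root_.map_smul, hTB, smul_smul]
  have hinner : (inner ℂ v (Matrix.toEuclideanLin A v) : ℂ)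
      = ∑ j, (B.repr v j * (μ j : ℂ)) * (starRingEnd ℂ) (B.repr v j) := by
    rw [hTv, inner_sum]
    congr 1; ext j
    rw [inner_smul_right, ← inner_conj_symm, ← B.repr_apply_apply]
  have hdp : star (⇑v : Fin n → ℂ) ⬝ᵥ (A *ᵥ ⇑v) = (inner ℂ v (Matrix.toEuclideanLin A v) : ℂ) :=
    by rw [dotProduct_comm]; exact (EuclideanSpace.inner_eq_star_dotProduct v (Matrix.toEuclideanLin A v)).symm
  rw [hdp, hinner]
  rw [Complex.re_sum]
  congr 1; ext j
  have h5 : B.repr v j * (μ j : ℂ) * (starRingEnd ℂ) (B.repr v j)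
      = (μ j : ℂ) * ((Complex.normSq (B.repr v j) : ℝ) : ℂ) := by
    rw [← Complex.mul_conj]; ring
  rw [h5]
  simp [← Complex.ofReal_mul]

lemma quad_ge (B : OrthonormalBasis (Fin n) ℂ (EuclideanSpace ℂ (Fin n)))
    (A : Matrix (Fin n) (Fin n) ℂ) (μ : Fin n → ℝ)
    (hB : ∀ j, A *ᵥ ⇑(B j) = μ j • ⇑(B j)) (s : Set (Fin n)) (c : ℝ)
    (hc : ∀ i ∈ s, c ≤ μ i) {v : EuclideanSpace ℂ (Fin n)}
    (hv : v ∈ Submodule.span ℂ (⇑B '' s)) :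
    c * ‖v‖ ^ 2 ≤ (star (⇑v : Fin n → ℂ) ⬝ᵥ (A *ᵥ ⇑v)).re := by
  rw [quad_repr B A μ hB v, norm_sq_repr B v, Finset.mul_sum]
  refine Finset.sum_le_sum fun i _ => ?_
  by_cases hi : i ∈ s
  · exact mul_le_mul_of_nonneg_right (hc i hi) (Complex.normSq_nonneg _)
  · simp [repr_zero_of_span B s hv hi]

lemma quad_le (B : OrthonormalBasis (Fin n) ℂ (EuclideanSpace ℂ (Fin n)))
    (A : Matrix (Fin n) (Fin n) ℂ) (μ : Fin n → ℝ)
    (hB : ∀ j, A *ᵥ ⇑(B j) = μ j • ⇑(B j)) (s : Set (Fin n)) (c : ℝ)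
    (hc : ∀ i ∈ s, μ i ≤ c) {v : EuclideanSpace ℂ (Fin n)}
    (hv : v ∈ Submodule.span ℂ (⇑B '' s)) :
    (star (⇑v : Fin n → ℂ) ⬝ᵥ (A *ᵥ ⇑v)).re ≤ c * ‖v‖ ^ 2 := by
  rw [quad_repr B A μ hB v, norm_sq_repr B v, Finset.mul_sum]
  refine Finset.sum_le_sum fun i _ => ?_
  by_cases hi : i ∈ s
  · exact mul_le_mul_of_nonneg_right (hc i hi) (Complex.normSq_nonneg _)
  · simp [repr_zero_of_span B s hv hi]

/-- The permutation realizing the decreasing sort. -/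
noncomputable def descPerm (f : Fin n → ℝ) : Equiv.Perm (Fin n) :=
  (Fin.revPerm).trans (Tuple.sort f)

lemma sortDesc_eq_comp (f : Fin n → ℝ) (i : Fin n) : sortDesc f i = f (descPerm f i) := rfl

lemma sortDesc_antitone (f : Fin n → ℝ) : Antitone (sortDesc f) := by
  intro i j hij
  exact Tuple.monotone_sort f (by simpa using Fin.rev_le_rev.mpr hij)

lemma span_orthofam_finrank (B : OrthonormalBasis (Fin n) ℂ (EuclideanSpace ℂ (Fin n)))
    (e : Equiv.Perm (Fin n)) (s : Finset (Fin n)) :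
    Module.finrank ℂ (Submodule.span ℂ (⇑B '' (e '' (s : Set (Fin n))))) = s.card := by
  have h1 : ⇑B '' (e '' (s : Set (Fin n))) = Set.range (fun i : s => B (e i)) := by
    rw [← Set.image_comp]
    ext w
    simp [Set.range_comp, Set.image_image]
  have hli : LinearIndependent ℂ (fun i : s => B (e i)) :=
    (B.orthonormal.comp (fun i : s => e i)
      (e.injective.comp Subtype.val_injective)).linearIndependent
  rw [h1, finrank_span_eq_card hli, Fintype.card_coe]

/-- **Weyl's monotonicity principle**: the decreasingly ordered eigenvalues are monotone in the
Loewner order. -/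
lemma weyl_mono {x y : Matrix (Fin n) (Fin n) ℂ} (hx : x.IsHermitian) (hy : y.IsHermitian)
    (hd : (y - x).PosSemidef) (k : Fin n) :
    eigsDesc hx k ≤ eigsDesc hy k := by
  classical
  set Bx := hx.eigenvectorBasis with hBx
  set By := hy.eigenvectorBasis with hBy
  set ex := descPerm hx.eigenvalues
  set ey := descPerm hy.eigenvalues
  set E := Submodule.span ℂ (⇑Bx '' (ex '' (Finset.Iic k : Set (Fin n)))) with hE
  set F := Submodule.span ℂ (⇑By '' (ey '' (Finset.Ici k : Set (Fin n)))) with hF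
  have hErank : Module.finrank ℂ E = (k : ℕ) + 1 := by
    rw [hE, span_orthofam_finrank, Fin.card_Iic]
  have hFrank : Module.finrank ℂ F = n - (k : ℕ) := by
    rw [hF, span_orthofam_finrank, Fin.card_Ici]
  have hinf : E ⊓ F ≠ ⊥ := by
    intro hbot
    have h1 := Submodule.finrank_sup_add_finrank_inf_eq E F
    rw [hbot] at h1
    have h2 : Module.finrank ℂ ↥(E ⊔ F) ≤ n := by
      have := Submodule.finrank_le (E ⊔ F)
      rwa [finrank_euclideanSpace_fin] at this
    have hk := k.isLt
    simp only [hErank, hFrank, finrank_bot, add_zero] at h1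
    omega
  obtain ⟨v, hvEF, hv0⟩ := Submodule.exists_mem_ne_zero_of_ne_bot hinf
  have hvE : v ∈ E := hvEF.1
  have hvF : v ∈ F := hvEF.2
  have hnorm : (0:ℝ) < ‖v‖ ^ 2 := by
    have := norm_pos_iff.mpr hv0
    positivity
  have h1 : eigsDesc hx k * ‖v‖ ^ 2 ≤ (star (⇑v : Fin n → ℂ) ⬝ᵥ (x *ᵥ ⇑v)).re := by
    refine quad_ge Bx x hx.eigenvalues (hx.mulVec_eigenvectorBasis) _ _ ?_ hvE
    rintro i ⟨j, hj, rfl⟩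
    exact sortDesc_antitone hx.eigenvalues (by simpa using hj)
  have h3 : (star (⇑v : Fin n → ℂ) ⬝ᵥ (y *ᵥ ⇑v)).re ≤ eigsDesc hy k * ‖v‖ ^ 2 := by
    refine quad_le By y hy.eigenvalues (hy.mulVec_eigenvectorBasis) _ _ ?_ hvF
    rintro i ⟨j, hj, rfl⟩
    exact sortDesc_antitone hy.eigenvalues (by simpa using hj)
  have h2 : (star (⇑v : Fin n → ℂ) ⬝ᵥ (x *ᵥ ⇑v)).re ≤ (star (⇑v : Fin n → ℂ) ⬝ᵥ (y *ᵥ ⇑v)).re := by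
    have h4 := hd.dotProduct_mulVec_nonneg (⇑v : Fin n → ℂ)
    rw [Complex.le_def] at h4
    have h5 := h4.1
    rw [Matrix.sub_mulVec, dotProduct_sub, Complex.sub_re] at h5
    simpa using h5
  exact le_of_mul_le_mul_right ((h1.trans h2).trans h3) hnorm

lemma trace_re_herCFC {x : Matrix (Fin n) (Fin n) ℂ} (hx : x.IsHermitian) (f : ℝ → ℝ) :
    (herCFC x hx f).trace.re = ∑ i, f (eigsDesc hx i) := by
  rw [trace_herCFC, Complex.re_sum]
  simp only [Complex.ofReal_re]
  exact (Equiv.sum_comp (descPerm hx.eigenvalues) (fun j => f (hx.eigenvalues j))).symm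

end Auxiliary

/-- Let `0 ≤ x ≤ y` be Hermitian matrices and `f` a strictly increasing continuous function on
`[0,∞)`. Then `Tr f(x) ≤ Tr f(y)`, with equality if and only if `x = y`. -/
theorem trace_cfc_le_of_loewner_le (n : ℕ) (x y : Matrix (Fin n) (Fin n) ℂ)
    (hx : x.PosSemidef) (hy : y.PosSemidef) (hxy : (y - x).PosSemidef)
    (f : ℝ → ℝ) (hmono : StrictMonoOn f (Set.Ici 0)) (hcont : ContinuousOn f (Set.Ici 0)) :
    (herCFC x hx.1 f).trace.re ≤ (herCFC y hy.1 f).trace.re ∧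
    ((herCFC x hx.1 f).trace.re = (herCFC y hy.1 f).trace.re ↔ x = y) := by
  classical
  have memx : ∀ i, eigsDesc hx.1 i ∈ Set.Ici (0:ℝ) := fun i => hx.eigenvalues_nonneg _
  have memy : ∀ i, eigsDesc hy.1 i ∈ Set.Ici (0:ℝ) := fun i => hy.eigenvalues_nonneg _
  have hle : ∀ i ∈ Finset.univ, f (eigsDesc hx.1 i) ≤ f (eigsDesc hy.1 i) := fun i _ =>
    hmono.monotoneOn (memx i) (memy i) (weyl_mono hx.1 hy.1 hxy i)
  rw [trace_re_herCFC hx.1 f, trace_re_herCFC hy.1 f]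
  refine ⟨Finset.sum_le_sum hle, ?_, ?_⟩
  · intro heq
    have hterm := (Finset.sum_eq_sum_iff_of_le hle).mp heq
    have heig : ∀ i, eigsDesc hx.1 i = eigsDesc hy.1 i := fun i =>
      hmono.injOn (memx i) (memy i) (hterm i (Finset.mem_univ i))
    have hs : ∑ i, hx.1.eigenvalues i = ∑ i, hy.1.eigenvalues i := by
      rw [← Equiv.sum_comp (descPerm hx.1.eigenvalues) hx.1.eigenvalues,
        ← Equiv.sum_comp (descPerm hy.1.eigenvalues) hy.1.eigenvalues]
      exact Finset.sum_congr rfl (fun i _ => heig i)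
    have htr : x.trace = y.trace := by
      rw [trace_eq_sum_eig hx.1, trace_eq_sum_eig hy.1]
      push_cast
      exact_mod_cast congrArg (Complex.ofReal) hs
    have hz : y - x = 0 := psd_trace_zero hxy (by rw [Matrix.trace_sub, htr, sub_self])
    exact (sub_eq_zero.mp hz).symm
  · rintro rfl
    rfl
end
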